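/- Let N ≥ 2, M > 0, fix an index i, let r > 0, and suppose that (a) f maps the closed ball B of radius r centered at x_i into itself, and (b) L := 2 β N M² (N − 1) · exp(−β (Δ_i − 2 r M)) < 1. Then f has a unique fixed point x_i* in B, and for every ξ ∈ B the iterates of the update rule converge to it geometrically: ‖f^{(n)}(ξ) − x_i*‖ ≤ L^n ‖ξ − x_i*‖ for all n ∈ ℕ, where f^{(n)} denotes the n-fold iterate of f. -/
import Mathlib


open scoped BigOperators RealInnerProductSpace

/-- softmax(v)_j = exp(v_j) / Σ_k exp(v_k). -/
noncomputable def softmax {N : ℕ} (v : Fin N → ℝ) : Fin N → ℝ :=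
  fun j => Real.exp (v j) / ∑ k, Real.exp (v k)

/-- The Hopfield update rule f(ξ) = X softmax(β Xᵀ ξ) = Σ_i softmax(β ⟪x_i, ξ⟫)_i • x_i. -/
noncomputable def hopfieldUpdate {d N : ℕ} (x : Fin N → EuclideanSpace ℝ (Fin d))
    (β : ℝ) (ξ : EuclideanSpace ℝ (Fin d)) : EuclideanSpace ℝ (Fin d) :=
  ∑ i, softmax (fun j => β * ⟪x j, ξ⟫) i • x i

section aux
variable {N : ℕ}

lemma sum_exp_pos [Nonempty (Fin N)] (v : Fin N → ℝ) : 0 < ∑ k, Real.exp (v k) :=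
  Finset.sum_pos (fun k _ => Real.exp_pos _) Finset.univ_nonempty

lemma softmax_pos [Nonempty (Fin N)] (v : Fin N → ℝ) (j : Fin N) : 0 < softmax v j :=
  div_pos (Real.exp_pos _) (sum_exp_pos v)

lemma softmax_sum [Nonempty (Fin N)] (v : Fin N → ℝ) : ∑ j, softmax v j = 1 := by
  simp only [softmax]
  rw [← Finset.sum_div, div_self (sum_exp_pos v).ne']

/-- comparison: softmax of perturbed vector is at least exp(-2s) times original,
if each coordinate moves by at most s. -/
lemma softmax_ratio [Nonempty (Fin N)] (v w : Fin N → ℝ) (s : ℝ)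
    (hs : ∀ k, |v k - w k| ≤ s) (j : Fin N) :
    Real.exp (-(2 * s)) * softmax v j ≤ softmax w j := by
  have hS : ∀ u : Fin N → ℝ, 0 < ∑ k, Real.exp (u k) := sum_exp_pos
  have h1 : ∑ k, Real.exp (w k) ≤ Real.exp s * ∑ k, Real.exp (v k) := by
    rw [Finset.mul_sum]
    refine Finset.sum_le_sum fun k _ => ?_
    rw [← Real.exp_add]
    exact Real.exp_le_exp.2 (by have := (abs_le.1 (hs k)).1; linarith)
  have h2 : Real.exp (-s) * Real.exp (v j) ≤ Real.exp (w j) := by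
    rw [← Real.exp_add]
    exact Real.exp_le_exp.2 (by have := (abs_le.1 (hs j)).2; linarith)
  unfold softmax
  rw [← mul_div_assoc, div_le_div_iff₀ (hS v) (hS w)]
  calc Real.exp (-(2*s)) * Real.exp (v j) * ∑ k, Real.exp (w k)
      ≤ Real.exp (-(2*s)) * Real.exp (v j) * (Real.exp s * ∑ k, Real.exp (v k)) := by
        refine mul_le_mul_of_nonneg_left h1 (by positivity)
    _ = (Real.exp (-(2*s)) * Real.exp s) * Real.exp (v j) * ∑ k, Real.exp (v k) := by ring
    _ = (Real.exp (-s) * Real.exp (v j)) * ∑ k, Real.exp (v k) := by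
        rw [← Real.exp_add]; ring_nf
    _ ≤ Real.exp (w j) * ∑ k, Real.exp (v k) :=
        mul_le_mul_of_nonneg_right h2 (hS v).le

lemma softmax_abs_sub_le [Nonempty (Fin N)] (v w : Fin N → ℝ) (s : ℝ) (hs0 : 0 ≤ s)
    (hs : ∀ k, |v k - w k| ≤ s) (j : Fin N) :
    |softmax v j - softmax w j| ≤ 2 * s * max (softmax v j) (softmax w j) := by
  have hvw := softmax_ratio v w s hs j
  have hwv := softmax_ratio w v s (fun k => by rw [abs_sub_comm]; exact hs k) j
  have hexp : 1 - Real.exp (-(2*s)) ≤ 2 * s := by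
    have := Real.add_one_le_exp (-(2*s)); linarith
  have hv := (softmax_pos v j)
  have hw := (softmax_pos w j)
  rw [abs_sub_le_iff]
  constructor
  · have : softmax v j - softmax w j ≤ (1 - Real.exp (-(2*s))) * softmax v j := by nlinarith
    calc softmax v j - softmax w j ≤ (1 - Real.exp (-(2*s))) * softmax v j := this
      _ ≤ 2 * s * softmax v j := mul_le_mul_of_nonneg_right hexp hv.le
      _ ≤ 2 * s * max (softmax v j) (softmax w j) := by
          refine mul_le_mul_of_nonneg_left (le_max_left _ _) (by positivity)
  · have : softmax w j - softmax v j ≤ (1 - Real.exp (-(2*s))) * softmax w j := by nlinarith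
    calc softmax w j - softmax v j ≤ (1 - Real.exp (-(2*s))) * softmax w j := this
      _ ≤ 2 * s * softmax w j := mul_le_mul_of_nonneg_right hexp hw.le
      _ ≤ 2 * s * max (softmax v j) (softmax w j) := by
          refine mul_le_mul_of_nonneg_left (le_max_right _ _) (by positivity)

end aux

section ball
variable {d N : ℕ}

/-- On the ball, for j ≠ i, softmax weight is small. -/
lemma softmax_small [Nonempty (Fin N)] (x : Fin N → EuclideanSpace ℝ (Fin d)) (β M Δ r : ℝ)
    (hβ : 0 < β) (hM : ∀ k, ‖x k‖ ≤ M)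
    (i : Fin N) (hΔ : ∀ j, j ≠ i → Δ ≤ ⟪x i, x i⟫ - ⟪x i, x j⟫)
    (ξ : EuclideanSpace ℝ (Fin d)) (hξ : ξ ∈ Metric.closedBall (x i) r)
    (j : Fin N) (hj : j ≠ i) :
    softmax (fun k => β * ⟪x k, ξ⟫) j ≤ Real.exp (-β * (Δ - 2 * r * M)) := by
  have hball : ‖ξ - x i‖ ≤ r := by
    rw [Metric.mem_closedBall, dist_eq_norm] at hξ; exact hξ
  have hinner : Δ - 2 * r * M ≤ ⟪x i, ξ⟫ - ⟪x j, ξ⟫ := by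
    have key : ⟪x i, ξ⟫ - ⟪x j, ξ⟫ = (⟪x i, x i⟫ - ⟪x i, x j⟫) + ⟪x i - x j, ξ - x i⟫ := by
      simp only [inner_sub_left, inner_sub_right]
      rw [real_inner_comm (x j) (x i)]
      ring
    have h1 : |⟪x i - x j, ξ - x i⟫| ≤ 2 * M * r := by
      calc |⟪x i - x j, ξ - x i⟫| ≤ ‖x i - x j‖ * ‖ξ - x i‖ := abs_real_inner_le_norm _ _
        _ ≤ (M + M) * r := by
            refine mul_le_mul ?_ hball (norm_nonneg _) (by have := (norm_nonneg (x i)).trans (hM i); linarith)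
            calc ‖x i - x j‖ ≤ ‖x i‖ + ‖x j‖ := norm_sub_le _ _
              _ ≤ M + M := add_le_add (hM i) (hM j)
        _ = 2 * M * r := by ring
    have := (abs_le.1 h1).1
    have h2 := hΔ j hj
    rw [key]; linarith
  have hS : Real.exp (β * ⟪x i, ξ⟫) ≤ ∑ k, Real.exp (β * ⟪x k, ξ⟫) :=
    Finset.single_le_sum (f := fun k => Real.exp (β * ⟪x k, ξ⟫))
      (fun k _ => (Real.exp_pos _).le) (Finset.mem_univ i)
  have hSpos : (0:ℝ) < ∑ k, Real.exp (β * ⟪x k, ξ⟫) := sum_exp_pos _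
  calc softmax (fun k => β * ⟪x k, ξ⟫) j
      ≤ Real.exp (β * ⟪x j, ξ⟫) / Real.exp (β * ⟪x i, ξ⟫) := by
        unfold softmax
        gcongr
    _ = Real.exp (β * ⟪x j, ξ⟫ - β * ⟪x i, ξ⟫) := by rw [Real.exp_sub]
    _ ≤ Real.exp (-β * (Δ - 2 * r * M)) := by
        refine Real.exp_le_exp.2 ?_
        nlinarith

end ball

lemma hopfield_lip {d N : ℕ} (hN : 2 ≤ N) (x : Fin N → EuclideanSpace ℝ (Fin d))
    (β M Δ r : ℝ) (hβ : 0 < β) (hM : ∀ k, ‖x k‖ ≤ M) (hM0 : 0 ≤ M)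
    (i : Fin N) (hΔ : ∀ j, j ≠ i → Δ ≤ ⟪x i, x i⟫ - ⟪x i, x j⟫)
    (ξ η : EuclideanSpace ℝ (Fin d))
    (hξ : ξ ∈ Metric.closedBall (x i) r) (hη : η ∈ Metric.closedBall (x i) r) :
    ‖hopfieldUpdate x β ξ - hopfieldUpdate x β η‖
      ≤ 4 * β * M ^ 2 * ((N:ℝ) - 1) * Real.exp (-β * (Δ - 2 * r * M)) * ‖ξ - η‖ := by
  haveI : Nonempty (Fin N) := ⟨⟨0, by omega⟩⟩
  set p : EuclideanSpace ℝ (Fin d) → Fin N → ℝ :=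
    fun ζ => softmax (fun k => β * ⟪x k, ζ⟫) with hp
  set s : ℝ := β * M * ‖ξ - η‖ with hsdef
  have hs0 : 0 ≤ s := by positivity
  have hsbound : ∀ k, |β * ⟪x k, ξ⟫ - β * ⟪x k, η⟫| ≤ s := by
    intro k
    rw [← mul_sub, abs_mul, abs_of_pos hβ, ← inner_sub_right]
    rw [hsdef, mul_assoc]
    refine mul_le_mul_of_nonneg_left ?_ hβ.le
    calc |⟪x k, ξ - η⟫| ≤ ‖x k‖ * ‖ξ - η‖ := abs_real_inner_le_norm _ _
      _ ≤ M * ‖ξ - η‖ := mul_le_mul_of_nonneg_right (hM k) (norm_nonneg _)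
  have hsum1 : ∑ j, (p ξ j - p η j) = 0 := by
    rw [Finset.sum_sub_distrib, hp, softmax_sum, softmax_sum]; ring
  have hdiff : hopfieldUpdate x β ξ - hopfieldUpdate x β η
      = ∑ j, (p ξ j - p η j) • (x j - x i) := by
    have : hopfieldUpdate x β ξ - hopfieldUpdate x β η = ∑ j, (p ξ j - p η j) • x j := by
      unfold hopfieldUpdate
      rw [← Finset.sum_sub_distrib]
      simp [sub_smul, hp]
    rw [this]
    simp only [smul_sub, Finset.sum_sub_distrib, ← Finset.sum_smul, hsum1, zero_smul, sub_zero]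
  set E : ℝ := Real.exp (-β * (Δ - 2 * r * M)) with hE
  have hterm : ∀ j ∈ Finset.univ.erase i,
      |p ξ j - p η j| * ‖x j - x i‖ ≤ (2 * s * E) * (2 * M) := by
    intro j hj
    have hji : j ≠ i := Finset.ne_of_mem_erase hj
    have h1 : |p ξ j - p η j| ≤ 2 * s * E := by
      refine (softmax_abs_sub_le _ _ s hs0 hsbound j).trans ?_
      refine mul_le_mul_of_nonneg_left ?_ (by positivity)
      exact max_le (softmax_small x β M Δ r hβ hM i hΔ ξ hξ j hji)
        (softmax_small x β M Δ r hβ hM i hΔ η hη j hji)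
    have h2 : ‖x j - x i‖ ≤ 2 * M := by
      calc ‖x j - x i‖ ≤ ‖x j‖ + ‖x i‖ := norm_sub_le _ _
        _ ≤ M + M := add_le_add (hM j) (hM i)
        _ = 2 * M := by ring
    exact mul_le_mul h1 h2 (norm_nonneg _) (by positivity)
  calc ‖hopfieldUpdate x β ξ - hopfieldUpdate x β η‖
      = ‖∑ j, (p ξ j - p η j) • (x j - x i)‖ := by rw [hdiff]
    _ ≤ ∑ j, ‖(p ξ j - p η j) • (x j - x i)‖ := norm_sum_le _ _
    _ = ∑ j, |p ξ j - p η j| * ‖x j - x i‖ := by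
        simp [norm_smul, Real.norm_eq_abs]
    _ = ∑ j ∈ Finset.univ.erase i, |p ξ j - p η j| * ‖x j - x i‖ := by
        rw [← Finset.add_sum_erase _ _ (Finset.mem_univ i)]
        simp
    _ ≤ ∑ _j ∈ Finset.univ.erase i, (2 * s * E) * (2 * M) := Finset.sum_le_sum hterm
    _ = ((N:ℝ) - 1) * ((2 * s * E) * (2 * M)) := by
        rw [Finset.sum_const, Finset.card_erase_of_mem (Finset.mem_univ i)]
        rw [Finset.card_univ, Fintype.card_fin, nsmul_eq_mul]
        rw [Nat.cast_sub (by omega)]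
        norm_num
    _ = 4 * β * M ^ 2 * ((N:ℝ) - 1) * E * ‖ξ - η‖ := by rw [hsdef]; ring

/-- For N ≥ 2, M > 0, index i and r > 0, if (a) f maps the closed ball B of
radius r centered at x_i into itself and (b) L = 2 β N M² (N − 1) exp(−β (Δ_i − 2 r M)) < 1,
then f has a unique fixed point x_i* in B and for every ξ ∈ B the iterates converge to it
geometrically: ‖f⁽ⁿ⁾(ξ) − x_i*‖ ≤ Lⁿ ‖ξ − x_i*‖ for all n. -/
theorem contraction_unique_fixedPoint_geometric
    {d N : ℕ} (hN : 2 ≤ N) (x : Fin N → EuclideanSpace ℝ (Fin d)) (β M Δ : ℝ)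
    (hβ : 0 < β) (hMpos : 0 < M)
    (hM : IsGreatest (Set.range fun i => ‖x i‖) M)
    (i : Fin N)
    (hΔ : IsLeast {v : ℝ | ∃ j, j ≠ i ∧ v = ⟪x i, x i⟫ - ⟪x i, x j⟫} Δ)
    (r : ℝ) (hr : 0 < r)
    (hmaps : Set.MapsTo (hopfieldUpdate x β)
      (Metric.closedBall (x i) r) (Metric.closedBall (x i) r))
    (hL : 2 * β * N * M ^ 2 * ((N : ℝ) - 1) * Real.exp (-β * (Δ - 2 * r * M)) < 1) :
    ∃ xstar ∈ Metric.closedBall (x i) r,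
      hopfieldUpdate x β xstar = xstar ∧
      (∀ y ∈ Metric.closedBall (x i) r, hopfieldUpdate x β y = y → y = xstar) ∧
      ∀ ξ ∈ Metric.closedBall (x i) r, ∀ n : ℕ,
        ‖(hopfieldUpdate x β)^[n] ξ - xstar‖
          ≤ (2 * β * N * M ^ 2 * ((N : ℝ) - 1) *
              Real.exp (-β * (Δ - 2 * r * M))) ^ n * ‖ξ - xstar‖ := by
  haveI : Nonempty (Fin N) := ⟨⟨0, by omega⟩⟩
  set L : ℝ := 2 * β * N * M ^ 2 * ((N : ℝ) - 1) * Real.exp (-β * (Δ - 2 * r * M)) with hLdef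
  set B := Metric.closedBall (x i) r with hB
  set f := hopfieldUpdate x β with hf
  have hM' : ∀ k, ‖x k‖ ≤ M := fun k => hM.2 ⟨k, rfl⟩
  have hΔ' : ∀ j, j ≠ i → Δ ≤ ⟪x i, x i⟫ - ⟪x i, x j⟫ := fun j hj => hΔ.2 ⟨j, hj, rfl⟩
  have hNR : (2:ℝ) ≤ (N:ℝ) := by exact_mod_cast hN
  have he := Real.exp_pos (-β * (Δ - 2 * r * M))
  have hL0 : 0 < L := by
    rw [hLdef]
    apply mul_pos _ he
    apply mul_pos _ (by linarith : (0:ℝ) < (N:ℝ) - 1)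
    apply mul_pos _ (by positivity : (0:ℝ) < M ^ 2)
    apply mul_pos (by linarith) (by linarith)
  have hlip : ∀ ξ ∈ B, ∀ η ∈ B, ‖f ξ - f η‖ ≤ L * ‖ξ - η‖ := by
    intro ξ hξ η hη
    refine (hopfield_lip hN x β M Δ r hβ hM' hMpos.le i hΔ' ξ η hξ hη).trans ?_
    rw [hLdef]
    have h4 : 4 * β * M ^ 2 * ((N:ℝ) - 1) ≤ 2 * β * N * M ^ 2 * ((N:ℝ) - 1) := by
      have h1 : (0:ℝ) ≤ β * M ^ 2 * ((N:ℝ) - 1) := by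
        apply mul_nonneg (mul_nonneg hβ.le (by positivity)) (by linarith)
      nlinarith
    exact mul_le_mul_of_nonneg_right (mul_le_mul_of_nonneg_right h4 he.le) (norm_nonneg _)
  have hBc : IsClosed B := Metric.isClosed_closedBall
  haveI : CompleteSpace B := hBc.completeSpace_coe
  haveI : Nonempty B := ⟨⟨x i, Metric.mem_closedBall_self hr.le⟩⟩
  set g : B → B := fun y => ⟨f y, hmaps y.2⟩ with hg
  have hgl : LipschitzWith ⟨L, hL0.le⟩ g := by
    refine LipschitzWith.of_dist_le_mul fun a b => ?_
    rw [Subtype.dist_eq, Subtype.dist_eq, dist_eq_norm, dist_eq_norm]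
    exact hlip a a.2 b b.2
  have hc : ContractingWith ⟨L, hL0.le⟩ g := ⟨by exact_mod_cast hL, hgl⟩
  set xs : B := ContractingWith.fixedPoint g hc with hxs
  have hfix : f (xs : EuclideanSpace ℝ (Fin d)) = xs :=
    congrArg Subtype.val (ContractingWith.fixedPoint_isFixedPt hc)
  refine ⟨xs, xs.2, hfix, ?_, ?_⟩
  · intro y hy hfy
    by_contra hne
    have h1 : ‖y - (xs:EuclideanSpace ℝ (Fin d))‖ ≤ L * ‖y - xs‖ := by
      calc ‖y - (xs:EuclideanSpace ℝ (Fin d))‖ = ‖f y - f xs‖ := by rw [hfy, hfix]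
        _ ≤ L * ‖y - xs‖ := hlip y hy xs xs.2
    have h2 : 0 < ‖y - (xs:EuclideanSpace ℝ (Fin d))‖ := by
      rw [norm_pos_iff]
      intro h
      exact hne (sub_eq_zero.1 h)
    nlinarith
  · intro ξ hξ n
    have hmem : ∀ m : ℕ, f^[m] ξ ∈ B := by
      intro m
      induction m with
      | zero => exact hξ
      | succ m ih => rw [Function.iterate_succ_apply']; exact hmaps ih
    induction n with
    | zero => simp
    | succ n ih =>
      have key : ‖f^[n+1] ξ - (xs:EuclideanSpace ℝ (Fin d))‖ ≤ L * ‖f^[n] ξ - xs‖ := by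
        rw [Function.iterate_succ_apply']
        calc ‖f (f^[n] ξ) - (xs:EuclideanSpace ℝ (Fin d))‖ = ‖f (f^[n] ξ) - f xs‖ := by
              rw [hfix]
          _ ≤ L * ‖f^[n] ξ - xs‖ := hlip _ (hmem n) xs xs.2
      calc ‖f^[n+1] ξ - (xs:EuclideanSpace ℝ (Fin d))‖ ≤ L * ‖f^[n] ξ - xs‖ := key
        _ ≤ L * (L ^ n * ‖ξ - xs‖) := mul_le_mul_of_nonneg_left ih hL0.le
        _ = L ^ (n+1) * ‖ξ - xs‖ := by ring
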